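/- arXiv:1711.10947 — 4 statements merged into one kernel-verified Lean document; each statement's English description precedes it below -/
import Mathlib

section
/- Let M1, M2, M3 be real matrices with M2 and M3 symmetric positive semi-definite (M1 of size p×q, M2 of size q×q, M3 of size p×p). Then every eigenvalue of the block matrix M = [[-M1ᵀM1 - M2, M1ᵀM3],[M1, -M3]] is real and non-positive. -/
open Matrix Complex
open scoped ComplexOrder

open scoped MatrixOrder in
/-- The complexification of a real PSD matrix is PSD. -/
lemma psd_map_ofReal {n : Type*} [Fintype n] [DecidableEq n]
    {A : Matrix n n ℝ} (hA : A.PosSemidef) :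
    (A.map (Complex.ofReal)).PosSemidef := by
  obtain ⟨B, hB⟩ := CStarAlgebra.nonneg_iff_eq_star_mul_self.mp hA.nonneg
  rw [Matrix.star_eq_conjTranspose] at hB
  subst hB
  have h : (Bᴴ * B).map (Complex.ofReal)
      = (B.map Complex.ofReal)ᴴ * (B.map Complex.ofReal) := by
    ext i j
    simp [Matrix.mul_apply, Matrix.conjTranspose_apply, Complex.conj_ofReal]
  rw [h]
  exact Matrix.posSemidef_conjTranspose_mul_self _

/-- Every eigenvalue of M = [[-M1ᵀM1 - M2, M1ᵀM3],[M1, -M3]] (M2, M3 real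
symmetric PSD) is real and non-positive. -/
theorem stmt0 (p q : ℕ)
    (M1 : Matrix (Fin p) (Fin q) ℝ)
    (M2 : Matrix (Fin q) (Fin q) ℝ) (M3 : Matrix (Fin p) (Fin p) ℝ)
    (h2 : M2.PosSemidef) (h3 : M3.PosSemidef)
    (M : Matrix (Fin q ⊕ Fin p) (Fin q ⊕ Fin p) ℝ)
    (hM : M = Matrix.fromBlocks (-(M1ᵀ * M1) - M2) (M1ᵀ * M3) M1 (-M3))
    (μ : ℂ) (v : Fin q ⊕ Fin p → ℂ) (hv : v ≠ 0)
    (heig : (M.map (Complex.ofReal)) *ᵥ v = μ • v) :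
    μ.im = 0 ∧ μ.re ≤ 0 := by
  classical
  set A1 := M1.map (Complex.ofReal) with hA1
  set A2 := M2.map (Complex.ofReal) with hA2
  set A3 := M3.map (Complex.ofReal) with hA3
  have hsym : ∀ i j, M3 j i = M3 i j := by
    intro i j
    have := congrFun (congrFun h3.1 i) j
    simpa [Matrix.conjTranspose_apply] using this
  have hA3herm : A3ᴴ = A3 := by
    ext i j
    simp [hA3, Matrix.conjTranspose_apply, Matrix.map_apply, Complex.conj_ofReal, hsym i j]
  have hmap : M.map Complex.ofReal =
      Matrix.fromBlocks (-(A1ᴴ * A1) - A2) (A1ᴴ * A3) A1 (-A3) := by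
    subst hM
    ext i j
    cases i <;> cases j <;>
      simp [Matrix.fromBlocks, Matrix.map_apply, Matrix.mul_apply,
        Matrix.conjTranspose_apply, Complex.conj_ofReal, hA1, hA2, hA3] <;>
      push_cast <;> ring
  set x : Fin q → ℂ := fun i => v (Sum.inl i) with hx
  set y : Fin p → ℂ := fun i => v (Sum.inr i) with hy
  have hv' : v = Sum.elim x y := by funext i; cases i <;> rfl
  rw [hmap, hv', Matrix.fromBlocks_mulVec] at heig
  have e1 : (-(A1ᴴ * A1) - A2) *ᵥ x + (A1ᴴ * A3) *ᵥ y = μ • x := by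
    funext i
    have := congrFun heig (Sum.inl i)
    simpa using this
  have e2 : A1 *ᵥ x + (-A3) *ᵥ y = μ • y := by
    funext i
    have := congrFun heig (Sum.inr i)
    simpa using this
  set a := A1 *ᵥ x with ha
  set b := A3 *ᵥ y with hb
  -- dot products
  have k1 : star x ⬝ᵥ ((-(A1ᴴ * A1) - A2) *ᵥ x + (A1ᴴ * A3) *ᵥ y)
      = μ * (star x ⬝ᵥ x) := by
    rw [e1, dotProduct_smul, smul_eq_mul]
  have k2 : star y ⬝ᵥ (A3 *ᵥ (A1 *ᵥ x + (-A3) *ᵥ y))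
      = μ * (star y ⬝ᵥ b) := by
    rw [e2, Matrix.mulVec_smul, dotProduct_smul, smul_eq_mul, hb]
  -- rewrite left sides
  have hstar1 : star x ᵥ* A1ᴴ = star a := by rw [ha, Matrix.star_mulVec]
  have hstar3 : star y ᵥ* A3 = star b := by
    rw [hb, Matrix.star_mulVec, hA3herm]
  have r1 : star x ⬝ᵥ ((-(A1ᴴ * A1) - A2) *ᵥ x + (A1ᴴ * A3) *ᵥ y)
      = -(star a ⬝ᵥ a) - star x ⬝ᵥ (A2 *ᵥ x) + star a ⬝ᵥ b := by
    rw [dotProduct_add, Matrix.sub_mulVec, Matrix.neg_mulVec,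
      dotProduct_sub, dotProduct_neg,
      ← Matrix.mulVec_mulVec, Matrix.dotProduct_mulVec _ A1ᴴ, hstar1,
      ← Matrix.mulVec_mulVec, Matrix.dotProduct_mulVec _ A1ᴴ, hstar1, ha, hb]
  have r2 : star y ⬝ᵥ (A3 *ᵥ (A1 *ᵥ x + (-A3) *ᵥ y))
      = star b ⬝ᵥ a - star b ⬝ᵥ b := by
    rw [Matrix.mulVec_add, dotProduct_add,
      Matrix.dotProduct_mulVec _ A3, hstar3,
      Matrix.neg_mulVec, Matrix.mulVec_neg, dotProduct_neg,
      Matrix.dotProduct_mulVec _ A3, hstar3, ha, hb]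
    ring
  set w := a - b with hw
  have hwdot : star w ⬝ᵥ w
      = star a ⬝ᵥ a - star a ⬝ᵥ b - star b ⬝ᵥ a + star b ⬝ᵥ b := by
    rw [hw, star_sub, sub_dotProduct, dotProduct_sub,
      dotProduct_sub]
    ring
  have key : μ * (star x ⬝ᵥ x + star y ⬝ᵥ b)
      = -(star x ⬝ᵥ (A2 *ᵥ x)) - star w ⬝ᵥ w := by
    rw [mul_add, ← k1, ← k2, r1, r2, hwdot]
    ring
  -- nonnegativity facts
  have psd2 : (A2).PosSemidef := hA2 ▸ psd_map_ofReal h2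
  have psd3 : (A3).PosSemidef := hA3 ▸ psd_map_ofReal h3
  have hc : 0 ≤ star x ⬝ᵥ (A2 *ᵥ x) := psd2.dotProduct_mulVec_nonneg x
  have hs : 0 ≤ star y ⬝ᵥ b := hb ▸ psd3.dotProduct_mulVec_nonneg y
  have ht : 0 ≤ star x ⬝ᵥ x := dotProduct_star_self_nonneg x
  have hn : 0 ≤ star w ⬝ᵥ w := dotProduct_star_self_nonneg w
  -- turn into real numbers
  obtain ⟨T, hT0, hT⟩ : ∃ T : ℝ, 0 ≤ T ∧ star x ⬝ᵥ x + star y ⬝ᵥ b = (T : ℂ) := by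
    have h := add_nonneg ht hs
    rw [Complex.nonneg_iff] at h
    exact ⟨_, h.1, by simp [Complex.ext_iff, h.2]⟩
  obtain ⟨K, hK0, hK⟩ : ∃ K : ℝ, 0 ≤ K ∧
      star x ⬝ᵥ (A2 *ᵥ x) + star w ⬝ᵥ w = (K : ℂ) := by
    have h := add_nonneg hc hn
    rw [Complex.nonneg_iff] at h
    exact ⟨_, h.1, by simp [Complex.ext_iff, h.2]⟩
  have key' : μ * (T : ℂ) = -(K : ℂ) := by
    rw [← hT, key, ← neg_add', hK]
  rcases eq_or_lt_of_le hT0 with hT0' | hT0'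
  · -- T = 0 : then x = 0 and A3 y = 0, so μ = 0
    have hsum0 : star x ⬝ᵥ x + star y ⬝ᵥ b = 0 := by rw [hT, ← hT0']; simp
    obtain ⟨hx0, hs0⟩ := (add_eq_zero_iff_of_nonneg ht hs).mp hsum0
    have hxz : x = 0 := dotProduct_star_self_eq_zero.mp hx0
    have hb0 : b = 0 := (psd3.dotProduct_mulVec_zero_iff y).mp (hb ▸ hs0)
    have haz : a = 0 := by rw [ha, hxz, Matrix.mulVec_zero]
    have hmy : μ • y = 0 := by
      rw [← e2, haz, Matrix.neg_mulVec, ← hb, hb0]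
      simp
    have hyz : y ≠ 0 := by
      intro h0
      apply hv
      rw [hv', hxz, h0]
      funext i; cases i <;> rfl
    have hμ0 : μ = 0 := by
      rcases smul_eq_zero.mp hmy with h | h
      · exact h
      · exact absurd h hyz
    simp [hμ0]
  · have hTne : (T : ℂ) ≠ 0 := by
      simpa using ne_of_gt hT0'
    have hμ : μ = -(K / T : ℝ) := by
      push_cast
      rw [neg_div', eq_div_iff hTne, key']
    rw [hμ]
    constructor
    · simp
    · simp only [Complex.neg_re, Complex.ofReal_re]
      have : 0 ≤ K / T := div_nonneg hK0 (le_of_lt hT0')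
      linarith
end

section
/- Let M1, M2, M3 be real matrices with M2 and M3 symmetric positive semi-definite, and let M = [[-M1ᵀM1 - M2, M1ᵀM3],[M1, -M3]]. If 0 is an eigenvalue of M, then it is non-defective: the algebraic multiplicity of 0 equals its geometric multiplicity, equivalently ker(M²) = ker(M). -/
open Matrix

private lemma dot_shift {m n : ℕ} (A : Matrix (Fin m) (Fin n) ℝ)
    (u : Fin m → ℝ) (w : Fin n → ℝ) :
    u ⬝ᵥ (A *ᵥ w) = (Aᵀ *ᵥ u) ⬝ᵥ w := by
  rw [Matrix.dotProduct_mulVec, Matrix.mulVec_transpose]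

private lemma dot_self_nonneg {n : ℕ} (u : Fin n → ℝ) : 0 ≤ u ⬝ᵥ u :=
  Finset.sum_nonneg fun i _ => mul_self_nonneg _

/-- For M = [[-M1ᵀM1 - M2, M1ᵀM3],[M1, -M3]] (M2, M3 real symmetric PSD),
the zero eigenvalue (if present) is non-defective: ker (M*M) = ker M. -/
theorem stmt1 (p q : ℕ)
    (M1 : Matrix (Fin p) (Fin q) ℝ)
    (M2 : Matrix (Fin q) (Fin q) ℝ) (M3 : Matrix (Fin p) (Fin p) ℝ)
    (h2 : M2.PosSemidef) (h3 : M3.PosSemidef)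
    (M : Matrix (Fin q ⊕ Fin p) (Fin q ⊕ Fin p) ℝ)
    (hM : M = Matrix.fromBlocks (-(M1ᵀ * M1) - M2) (M1ᵀ * M3) M1 (-M3)) :
    ∀ v : Fin q ⊕ Fin p → ℝ, (M * M) *ᵥ v = 0 ↔ M *ᵥ v = 0 := by
  have hM2t : M2ᵀ = M2 := by simpa using h2.1.eq
  have hM3t : M3ᵀ = M3 := by simpa using h3.1.eq
  intro v
  constructor
  · intro h
    set x : Fin q → ℝ := v ∘ Sum.inl with hx
    set y : Fin p → ℝ := v ∘ Sum.inr with hy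
    have hv : v = Sum.elim x y := (Sum.elim_comp_inl_inr v).symm
    set b : Fin p → ℝ := M1 *ᵥ x - M3 *ᵥ y with hb
    set a : Fin q → ℝ := -(M1ᵀ *ᵥ b) - M2 *ᵥ x with ha
    have hw : M *ᵥ v = Sum.elim a b := by
      rw [hM, hv, fromBlocks_mulVec, Sum.elim_comp_inl, Sum.elim_comp_inr]
      congr 1
      · rw [ha, hb]
        simp only [sub_mulVec, neg_mulVec, ← mulVec_mulVec, mulVec_sub]
        abel
      · rw [hb, neg_mulVec, sub_eq_add_neg]
    rw [← mulVec_mulVec, hw] at h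
    rw [hM, fromBlocks_mulVec, Sum.elim_comp_inl, Sum.elim_comp_inr] at h
    have eq1 : (-(M1ᵀ * M1) - M2) *ᵥ a + (M1ᵀ * M3) *ᵥ b = 0 := by
      funext i; exact congrFun h (Sum.inl i)
    have eq2 : M1 *ᵥ a + (-M3) *ᵥ b = 0 := by
      funext i; exact congrFun h (Sum.inr i)
    have hM3b : M3 *ᵥ b = M1 *ᵥ a := by
      rw [neg_mulVec] at eq2
      linear_combination (norm := (funext i; simp; try ring)) - eq2
    have hM2a : M2 *ᵥ a = 0 := by
      rw [sub_mulVec, neg_mulVec, ← mulVec_mulVec, ← mulVec_mulVec, hM3b] at eq1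
      linear_combination (norm := (funext i; simp; try ring)) - eq1
    -- key: a ⬝ᵥ a + b ⬝ᵥ (M3 *ᵥ b) = 0
    have key : a ⬝ᵥ a + b ⬝ᵥ (M3 *ᵥ b) = 0 := by
      have h1 : a ⬝ᵥ (M1ᵀ *ᵥ b) = b ⬝ᵥ (M3 *ᵥ b) := by
        rw [dot_shift M1ᵀ a b, transpose_transpose, ← hM3b]
        rw [dotProduct_comm, dot_shift M3 b b, hM3t]
      have h2' : a ⬝ᵥ (M2 *ᵥ x) = 0 := by
        rw [dot_shift M2 a x, hM2t, hM2a, zero_dotProduct]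
      calc a ⬝ᵥ a + b ⬝ᵥ (M3 *ᵥ b)
          = a ⬝ᵥ (-(M1ᵀ *ᵥ b) - M2 *ᵥ x) + b ⬝ᵥ (M3 *ᵥ b) := by rw [← ha]
        _ = -(a ⬝ᵥ (M1ᵀ *ᵥ b)) - a ⬝ᵥ (M2 *ᵥ x) + b ⬝ᵥ (M3 *ᵥ b) := by
            rw [dotProduct_sub, dotProduct_neg]
        _ = 0 := by rw [h1, h2']; ring
    have haa : 0 ≤ a ⬝ᵥ a := dot_self_nonneg a
    have hbb : 0 ≤ b ⬝ᵥ (M3 *ᵥ b) := by simpa using h3.dotProduct_mulVec_nonneg b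
    have ha0 : a = 0 := by
      have : a ⬝ᵥ a = 0 := by linarith
      exact dotProduct_self_eq_zero.mp this
    have hM3b0 : M3 *ᵥ b = 0 := by
      have hz : b ⬝ᵥ (M3 *ᵥ b) = 0 := by linarith
      exact (h3.dotProduct_mulVec_zero_iff b).mp (by simpa using hz)
    have hM1tb : M1ᵀ *ᵥ b = -(M2 *ᵥ x) := by
      have hz : -(M1ᵀ *ᵥ b) - M2 *ᵥ x = 0 := by rw [← ha, ha0]
      linear_combination (norm := (funext i; simp; try ring)) - hz
    have hb0 : b = 0 := by
      have e3 : (M3 *ᵥ y) ⬝ᵥ b = 0 := by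
        rw [dotProduct_comm, dot_shift M3 b y, hM3t, hM3b0, zero_dotProduct]
      have e4 : (M1 *ᵥ x) ⬝ᵥ b = -(x ⬝ᵥ (M2 *ᵥ x)) := by
        rw [dotProduct_comm, dot_shift M1 b x, hM1tb, neg_dotProduct, dotProduct_comm]
      have hbbb : b ⬝ᵥ b = -(x ⬝ᵥ (M2 *ᵥ x)) := by
        calc b ⬝ᵥ b = (M1 *ᵥ x - M3 *ᵥ y) ⬝ᵥ b := by rw [← hb]
          _ = (M1 *ᵥ x) ⬝ᵥ b - (M3 *ᵥ y) ⬝ᵥ b := by rw [sub_dotProduct]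
          _ = -(x ⬝ᵥ (M2 *ᵥ x)) := by rw [e3, e4, sub_zero]
      have h2x : 0 ≤ x ⬝ᵥ (M2 *ᵥ x) := by simpa using h2.dotProduct_mulVec_nonneg x
      have : b ⬝ᵥ b = 0 := le_antisymm (by linarith) (dot_self_nonneg b)
      exact dotProduct_self_eq_zero.mp this
    rw [hw, ha0, hb0]
    funext i; cases i <;> simp
  · intro h
    rw [← mulVec_mulVec, h, mulVec_zero]
end

section
/- Let L be the Laplacian matrix of a connected bidirectional (undirected) graph on c nodes, and let m be a positive integer. Then the image of the Kronecker product L ⊗ I_m equals the kernel of 1_cᵀ ⊗ I_m, where 1_c is the all-ones vector in ℝ^c. -/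
open Matrix Kronecker

lemma colsum_lap (c : ℕ) (G : SimpleGraph (Fin c)) [DecidableRel G.Adj] (k : Fin c) :
    ∑ i, G.lapMatrix ℝ i k = 0 := by
  have h1 := congrFun (G.lapMatrix_mulVec_const_eq_zero (R := ℝ)) k
  simp [Matrix.mulVec, dotProduct] at h1
  calc ∑ i, G.lapMatrix ℝ i k = ∑ i, G.lapMatrix ℝ k i := by
        refine Finset.sum_congr rfl fun i _ => ?_
        exact (G.isSymm_lapMatrix (R := ℝ)).apply k i
    _ = 0 := h1

lemma range_lap (c : ℕ) (G : SimpleGraph (Fin c)) [DecidableRel G.Adj] (hG : G.Connected) :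
    Set.range ((G.lapMatrix ℝ).mulVec) = {x : Fin c → ℝ | ∑ i, x i = 0} := by
  have hne : Nonempty (Fin c) := hG.nonempty
  have hc : 1 ≤ c := by
    obtain ⟨i⟩ := hne; exact i.pos
  set f : (Fin c → ℝ) →ₗ[ℝ] ℝ := ∑ i : Fin c, (LinearMap.proj i) with hf
  have hfx : ∀ x, f x = ∑ i, x i := by
    intro x; simp [hf]
  set S := LinearMap.range (Matrix.toLin' (G.lapMatrix ℝ)) with hS
  set T := LinearMap.ker f with hT
  have hle : S ≤ T := by
    rintro x ⟨v, rfl⟩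
    simp only [hT, LinearMap.mem_ker, hfx, Matrix.toLin'_apply, Matrix.mulVec,
      dotProduct]
    rw [Finset.sum_comm]
    rw [show (0:ℝ) = ∑ k : Fin c, 0 by simp]
    refine Finset.sum_congr rfl fun k _ => ?_
    rw [← Finset.sum_mul, colsum_lap c G k, zero_mul]
  -- f surjective
  have hfsurj : Function.Surjective f := by
    intro r
    obtain ⟨i0⟩ := hne
    exact ⟨Pi.single i0 r, by simp [hfx]⟩
  have hrangef : LinearMap.range f = ⊤ := LinearMap.range_eq_top.mpr hfsurj
  have hdimT : Module.finrank ℝ T = c - 1 := by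
    have h2 := LinearMap.finrank_range_add_finrank_ker f
    rw [hrangef, ← hT] at h2
    simp [Module.finrank_fintype_fun_eq_card] at h2
    omega
  have hker1 : Module.finrank ℝ (LinearMap.ker (Matrix.toLin' (G.lapMatrix ℝ))) = 1 := by
    rw [← G.card_connectedComponent_eq_finrank_ker_toLin'_lapMatrix]
    obtain ⟨i0⟩ := hne
    have hall : ∀ a : G.ConnectedComponent, a = G.connectedComponentMk i0 := by
      refine SimpleGraph.ConnectedComponent.ind fun u => ?_
      exact SimpleGraph.ConnectedComponent.sound (hG.preconnected u i0)
    exact Fintype.card_eq_one_iff.mpr ⟨_, hall⟩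
  have hdimS : Module.finrank ℝ S = c - 1 := by
    have h2 := LinearMap.finrank_range_add_finrank_ker (Matrix.toLin' (G.lapMatrix ℝ))
    rw [hker1, ← hS] at h2
    simp [Module.finrank_fintype_fun_eq_card] at h2
    omega
  have hST : S = T := Submodule.eq_of_le_of_finrank_le hle (by rw [hdimS, hdimT])
  ext x
  constructor
  · rintro ⟨v, rfl⟩
    have : (Matrix.toLin' (G.lapMatrix ℝ)) v ∈ T := hST ▸ LinearMap.mem_range_self _ v
    simpa [hT, hfx, Matrix.toLin'_apply] using this
  · intro hx
    have : x ∈ T := by simpa [hT, hfx] using hx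
    rw [← hST] at this
    obtain ⟨v, hv⟩ := this
    exact ⟨v, by simpa [Matrix.toLin'_apply] using hv⟩

/-- For the Laplacian L of a connected graph on c nodes,
image (L ⊗ I_m) = ker (1_cᵀ ⊗ I_m), i.e. the image of L ⊗ I_m is exactly the
set of vectors whose m-dimensional blocks sum to zero. -/
theorem stmt4 (c m : ℕ) (hm : 0 < m) (G : SimpleGraph (Fin c))
    [DecidableRel G.Adj] (hG : G.Connected) :
    Set.range ((G.lapMatrix ℝ ⊗ₖ (1 : Matrix (Fin m) (Fin m) ℝ)).mulVec) =
      {w : Fin c × Fin m → ℝ | ∀ j : Fin m, ∑ i : Fin c, w (i, j) = 0} := by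
  have key : ∀ (v : Fin c × Fin m → ℝ) (i : Fin c) (j : Fin m),
      (G.lapMatrix ℝ ⊗ₖ (1 : Matrix (Fin m) (Fin m) ℝ)).mulVec v (i, j)
        = ∑ i' : Fin c, G.lapMatrix ℝ i i' * v (i', j) := by
    intro v i j
    simp only [Matrix.mulVec, dotProduct, kroneckerMap_apply, Fintype.sum_prod_type,
      Matrix.one_apply, mul_ite, mul_one, mul_zero, ite_mul, zero_mul]
    refine Finset.sum_congr rfl fun i' _ => ?_
    simp
  ext w
  constructor
  · rintro ⟨v, rfl⟩ j
    simp only [key]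
    rw [Finset.sum_comm]
    rw [show (0:ℝ) = ∑ k : Fin c, 0 by simp]
    refine Finset.sum_congr rfl fun k _ => ?_
    rw [← Finset.sum_mul, colsum_lap c G k, zero_mul]
  · intro hw
    have : ∀ j : Fin m, ∃ v : Fin c → ℝ, (G.lapMatrix ℝ).mulVec v = fun i => w (i, j) := by
      intro j
      have : (fun i => w (i, j)) ∈ Set.range ((G.lapMatrix ℝ).mulVec) := by
        rw [range_lap c G hG]; exact hw j
      exact this
    choose vv hvv using this
    refine ⟨fun p => vv p.2 p.1, ?_⟩
    funext p
    obtain ⟨i, j⟩ := p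
    rw [key]
    have := congrFun (hvv j) i
    simpa [Matrix.mulVec, dotProduct] using this
end

section
/- Let M = [[-M1ᵀM1 − M2, M1ᵀM3],[M1, −M3]] with M2, M3 real symmetric positive semi-definite. If (u, ū) is an eigenvector of M for a purely imaginary nonzero eigenvalue λ = iβ (β ≠ 0, real), then u = 0, M3ū = 0, and consequently ū = 0; hence M has no nonzero purely imaginary eigenvalues. -/
open Matrix Complex ComplexOrder

lemma psd_map {n : ℕ} {A : Matrix (Fin n) (Fin n) ℝ} (hA : A.PosSemidef) :
    (A.map (Complex.ofReal)).PosSemidef := by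
  obtain ⟨B, rfl⟩ : ∃ B : Matrix (Fin n) (Fin n) ℝ, A = Bᴴ * B := by
    open scoped MatrixOrder in
    obtain ⟨X, hX, -, rfl⟩ := CFC.exists_sqrt_of_isSelfAdjoint_of_quasispectrumRestricts
      hA.isHermitian (QuasispectrumRestricts.nnreal_of_nonneg hA.nonneg)
    exact ⟨X, by rw [← star_eq_conjTranspose, hX.star_eq]⟩
  have : (Bᴴ * B).map (Complex.ofReal) = (B.map Complex.ofReal)ᴴ * (B.map Complex.ofReal) := by
    ext i j
    simp [Matrix.mul_apply, Matrix.conjTranspose_apply]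
  rw [this]
  exact Matrix.posSemidef_conjTranspose_mul_self _

/-- M = [[-M1ᵀM1 − M2, M1ᵀM3],[M1, −M3]] (M2, M3 real symmetric PSD) has no
nonzero purely imaginary eigenvalues: an eigenvector (u, ū) for λ = iβ with
β ≠ 0 must satisfy u = 0, M3ū = 0 and hence ū = 0, a contradiction with being
an eigenvector. -/
theorem stmt14 (p q : ℕ)
    (M1 : Matrix (Fin p) (Fin q) ℝ)
    (M2 : Matrix (Fin q) (Fin q) ℝ) (M3 : Matrix (Fin p) (Fin p) ℝ)
    (h2 : M2.PosSemidef) (h3 : M3.PosSemidef)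
    (M : Matrix (Fin q ⊕ Fin p) (Fin q ⊕ Fin p) ℝ)
    (hM : M = Matrix.fromBlocks (-(M1ᵀ * M1) - M2) (M1ᵀ * M3) M1 (-M3))
    (β : ℝ) (hβ : β ≠ 0)
    (u : Fin q → ℂ) (ub : Fin p → ℂ)
    (heig : (M.map (Complex.ofReal)) *ᵥ Sum.elim u ub =
      (Complex.I * β) • Sum.elim u ub) :
    u = 0 ∧ (M3.map (Complex.ofReal)) *ᵥ ub = 0 ∧ ub = 0 := by
  subst hM
  set A1 := M1.map Complex.ofReal with hA1
  set A2 := M2.map Complex.ofReal with hA2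
  set A3 := M3.map Complex.ofReal with hA3
  have hmap : (Matrix.fromBlocks (-(M1ᵀ * M1) - M2) (M1ᵀ * M3) M1 (-M3)).map Complex.ofReal
      = Matrix.fromBlocks (-(A1ᵀ * A1) - A2) (A1ᵀ * A3) A1 (-A3) := by
    ext (i | i) (j | j) <;>
      simp [hA1, hA2, hA3, Matrix.mul_apply, Matrix.fromBlocks, Matrix.transpose_apply]
  rw [hmap, Matrix.fromBlocks_mulVec] at heig
  have eq1 : (-(A1ᵀ * A1) - A2) *ᵥ u + (A1ᵀ * A3) *ᵥ ub = (Complex.I * β) • u := by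
    funext i; simpa using congrFun heig (Sum.inl i)
  have eq2 : A1 *ᵥ u + (-A3) *ᵥ ub = (Complex.I * β) • ub := by
    funext i; simpa using congrFun heig (Sum.inr i)
  set a := A1 *ᵥ u with ha
  set b := A3 *ᵥ ub with hb
  -- star commutes with real-entried mulVec
  have hstar1 : star a = A1 *ᵥ star u := by
    funext i
    simp [ha, hA1, Matrix.mulVec, dotProduct, star_sum, star_mul', Complex.conj_ofReal,
      mul_comm]
  have hstar3 : star b = A3 *ᵥ star ub := by
    funext i
    simp [hb, hA3, Matrix.mulVec, dotProduct, star_sum, star_mul', Complex.conj_ofReal,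
      mul_comm]
  have hA3symm : A3ᵀ = A3 := by
    have h := h3.1
    ext i j
    have := congrFun (congrFun h i) j
    simp only [Matrix.conjTranspose_apply, star_trivial] at this
    simp [hA3, Matrix.transpose_apply, this]
  have k1 : ∀ x : Fin p → ℂ, star u ⬝ᵥ (A1ᵀ *ᵥ x) = star a ⬝ᵥ x := by
    intro x
    rw [Matrix.dotProduct_mulVec, Matrix.vecMul_transpose, ← hstar1]
  have k1' : star u ⬝ᵥ (A1ᵀ *ᵥ a) = star a ⬝ᵥ a := k1 a
  have k3 : ∀ x : Fin p → ℂ, star ub ⬝ᵥ (A3 *ᵥ x) = star b ⬝ᵥ x := by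
    intro x
    conv_lhs => rw [← hA3symm]
    rw [Matrix.dotProduct_mulVec, Matrix.vecMul_transpose, ← hstar3]
  have S1 : -(star a ⬝ᵥ a) - star u ⬝ᵥ (A2 *ᵥ u) + star a ⬝ᵥ b
      = (Complex.I * β) * (star u ⬝ᵥ u) := by
    have := congrArg (fun v => star u ⬝ᵥ v) eq1
    simpa [dotProduct_add, Matrix.sub_mulVec, Matrix.neg_mulVec, dotProduct_sub,
      dotProduct_neg, ← Matrix.mulVec_mulVec, k1, dotProduct_smul,
      smul_eq_mul] using this
  have S2 : star b ⬝ᵥ a - star b ⬝ᵥ b = (Complex.I * β) * (star ub ⬝ᵥ b) := by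
    have := congrArg (fun v => star b ⬝ᵥ v) eq2
    have hbu : star b ⬝ᵥ ub = star ub ⬝ᵥ b := (k3 ub).symm
    simpa [dotProduct_add, Matrix.neg_mulVec, dotProduct_neg,
      dotProduct_smul, smul_eq_mul, hbu, sub_eq_add_neg] using this
  set w := a - b with hwdef
  have hw : star w ⬝ᵥ w = star a ⬝ᵥ a - star a ⬝ᵥ b - star b ⬝ᵥ a + star b ⬝ᵥ b := by
    simp only [hwdef, star_sub, sub_dotProduct, dotProduct_sub]
    ring
  have key : (Complex.I * β) * ((star u ⬝ᵥ u) + (star ub ⬝ᵥ b))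
      = -(star w ⬝ᵥ w) - star u ⬝ᵥ (A2 *ᵥ u) := by
    rw [hw]; linear_combination -S1 - S2
  -- nonnegativity facts
  have hq : 0 ≤ star u ⬝ᵥ (A2 *ᵥ u) := (psd_map h2).dotProduct_mulVec_nonneg u
  have hr2 : 0 ≤ star ub ⬝ᵥ b := (psd_map h3).dotProduct_mulVec_nonneg ub
  have hr1 : 0 ≤ star u ⬝ᵥ u := dotProduct_star_self_nonneg u
  have hs : 0 ≤ star w ⬝ᵥ w := dotProduct_star_self_nonneg w
  rw [Complex.nonneg_iff] at hq hr2 hr1 hs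
  have him := congrArg Complex.im key
  simp only [Complex.mul_im, Complex.mul_re, Complex.I_re, Complex.I_im, Complex.ofReal_re,
    Complex.ofReal_im, Complex.add_re, Complex.add_im, Complex.neg_im, Complex.sub_im,
    ← hr1.2, ← hr2.2, ← hs.2, ← hq.2] at him
  -- him : β * (re r1 + re r2) = 0 (after simplification)
  have him2 : β * ((star u ⬝ᵥ u).re + (star ub ⬝ᵥ b).re) = 0 := by linear_combination him
  have hre0 : (star u ⬝ᵥ u).re + (star ub ⬝ᵥ b).re = 0 :=
    (mul_eq_zero.mp him2).resolve_left hβ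
  have hr1z : (star u ⬝ᵥ u).re = 0 := by linarith [hr1.1, hr2.1]
  have hr2z : (star ub ⬝ᵥ b).re = 0 := by linarith [hr1.1, hr2.1]
  have hu : u = 0 := by
    have : star u ⬝ᵥ u = 0 := by
      apply Complex.ext <;> simp [hr1z, ← hr1.2]
    exact dotProduct_star_self_eq_zero.mp this
  have hbz : A3 *ᵥ ub = 0 := by
    have : star ub ⬝ᵥ (A3 *ᵥ ub) = 0 := by
      apply Complex.ext <;> simp [← hb, hr2z, ← hr2.2]
    exact ((psd_map h3).dotProduct_mulVec_zero_iff ub).mp this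
  refine ⟨hu, hbz, ?_⟩
  have ha0 : a = 0 := by rw [ha, hu, Matrix.mulVec_zero]
  have eq2' : (0 : Fin p → ℂ) = (Complex.I * β) • ub := by
    rw [← eq2, ha0, Matrix.neg_mulVec, hbz]
    simp
  have hIβ : Complex.I * (β : ℂ) ≠ 0 := by
    simp [Complex.I_ne_zero, Complex.ofReal_ne_zero, hβ]
  have := eq2'.symm
  rwa [smul_eq_zero_iff_right hIβ] at this
end
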